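/- Let k be a commutative ring with unity, C a small category, 𝔄: C → k-Alg a precosheaf of unital k-algebras on C, and 𝔑: C → k-Mod a right 𝔄-module. Then the Grothendieck construction Gr_C(𝔄,𝔑) is a category: the composition law (r,m,f)∘(s,n,g) = (𝔄(g)(r)s, n + 𝔑(g)(m)·s, fg) is associative, and for each object x the morphism (1_{𝔄(x)}, 0_{𝔑(x)}, 1_x) is a two-sided identity for this composition. -/
import Mathlib


open CategoryTheory MulOpposite

universe u

/-- A precosheaf of unital `k`-algebras on a small category `C`:
a functor `C → k-Alg`. -/
structure AlgPrecosheaf (k : Type u) [CommRing k] (C : Type u) [SmallCategory C] where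
  A : C → Type u
  [ringA : ∀ x, Ring (A x)]
  [algA : ∀ x, Algebra k (A x)]
  map : ∀ {x y : C}, (x ⟶ y) → (A x →ₐ[k] A y)
  map_id : ∀ x : C, map (𝟙 x) = AlgHom.id k (A x)
  map_comp : ∀ {x y z : C} (f : x ⟶ y) (g : y ⟶ z), map (f ≫ g) = (map g).comp (map f)

attribute [instance] AlgPrecosheaf.ringA AlgPrecosheaf.algA

variable {k : Type u} [CommRing k] {C : Type u} [SmallCategory C]

/-- A right `𝔄`-module: a functor `𝔑 : C → k-Mod` such that each `𝔑(x)` is a right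
`𝔄(x)`-module and `𝔑(f)(m·s) = 𝔑(f)(m)·𝔄(f)(s)`. -/
structure AlgRightMod (𝔸 : AlgPrecosheaf k C) where
  N : C → Type u
  [addN : ∀ x, AddCommGroup (N x)]
  [modk : ∀ x, Module k (N x)]
  [modr : ∀ x, Module (𝔸.A x)ᵐᵒᵖ (N x)]
  [towr : ∀ x, IsScalarTower k (𝔸.A x)ᵐᵒᵖ (N x)]
  map : ∀ {x y : C}, (x ⟶ y) → (N x →ₗ[k] N y)
  map_id : ∀ x : C, map (𝟙 x) = LinearMap.id
  map_comp : ∀ {x y z : C} (f : x ⟶ y) (g : y ⟶ z), map (f ≫ g) = (map g).comp (map f)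
  map_smul_right : ∀ {x y : C} (f : x ⟶ y) (s : 𝔸.A x) (m : N x),
    map f (op s • m) = op (𝔸.map f s) • map f m

attribute [instance] AlgRightMod.addN AlgRightMod.modk AlgRightMod.modr AlgRightMod.towr

variable {𝔸 : AlgPrecosheaf k C}

/-- The composition law of the Grothendieck construction `Gr_C(𝔄, 𝔑)` of `𝔄` and a
right `𝔄`-module `𝔑`: `(r, m, f) ∘ (s, n, g) = (𝔄(g)(r)s, n + 𝔑(g)(m)·s, fg)`. -/
def grNComp (𝕟 : AlgRightMod 𝔸) {x y z : C}
    (p : 𝔸.A y × 𝕟.N y × (x ⟶ y)) (q : 𝔸.A z × 𝕟.N z × (y ⟶ z)) :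
    𝔸.A z × 𝕟.N z × (x ⟶ z) :=
  (𝔸.map q.2.2 p.1 * q.1,
   q.2.1 + op q.1 • 𝕟.map q.2.2 p.2.1,
   p.2.2 ≫ q.2.2)

/-- The identity morphism `(1_{𝔄(x)}, 0_{𝔑(x)}, 1_x)` of `Gr_C(𝔄, 𝔑)` at `x`. -/
def grNId (𝕟 : AlgRightMod 𝔸) (x : C) : 𝔸.A x × 𝕟.N x × (x ⟶ x) :=
  (1, 0, 𝟙 x)

/-- **Statement 10.** The Grothendieck construction `Gr_C(𝔄, 𝔑)` of `𝔄` and a right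
`𝔄`-module `𝔑` is a category: its composition law is associative and
`(1_{𝔄(x)}, 0_{𝔑(x)}, 1_x)` is a two-sided identity at each object `x`. -/
theorem statement_10 (𝕟 : AlgRightMod 𝔸) :
    (∀ (w x y z : C) (p : 𝔸.A x × 𝕟.N x × (w ⟶ x)) (q : 𝔸.A y × 𝕟.N y × (x ⟶ y))
        (t : 𝔸.A z × 𝕟.N z × (y ⟶ z)),
        grNComp 𝕟 (grNComp 𝕟 p q) t = grNComp 𝕟 p (grNComp 𝕟 q t)) ∧
    (∀ (x y : C) (p : 𝔸.A y × 𝕟.N y × (x ⟶ y)),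
        grNComp 𝕟 (grNId 𝕟 x) p = p ∧ grNComp 𝕟 p (grNId 𝕟 y) = p) := by
  constructor
  · intro w x y z p q t
    obtain ⟨r, m, f⟩ := p
    obtain ⟨s, n, g⟩ := q
    obtain ⟨u, v, h⟩ := t
    simp only [grNComp, 𝔸.map_comp, 𝕟.map_comp, AlgHom.comp_apply, LinearMap.comp_apply,
      Prod.mk.injEq, Category.assoc, map_mul, map_add, smul_add, 𝕟.map_smul_right]
    refine ⟨mul_assoc _ _ _, ?_, trivial⟩
    rw [add_assoc, op_mul, mul_smul, smul_smul]
  · intro x y p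
    obtain ⟨r, m, f⟩ := p
    constructor <;>
      simp [grNComp, grNId, 𝔸.map_id, 𝕟.map_id, 𝕟.map_smul_right]
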